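/- For every integer m ≥ 3 one has δ_1(1,m) ≥ δ_0(1,m); equivalently, with L = lcm{1,2,...,m-1}, the number of x ∈ {1,...,L} having exactly one divisor d with 1 < d < m is at least φ(L), where φ is Euler's totient function. -/

import Mathlib

/-- `Llcm n m` is the least common multiple of the integers strictly between `n` and `m`,
i.e. of `{n+1, ..., m-1}`. -/
def Llcm (n m : ℕ) : ℕ := (Finset.Ioo n m).lcm id

/-- `delta r n m` is the density `δ_r(n,m)` of positive integers with exactly `r`
divisors in the open interval `(n, m)`: the proportion of `x ∈ {1, ..., Llcm n m}`
having exactly `r` divisors `d` with `n < d < m`. -/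
def delta (r n m : ℕ) : ℚ :=
  (((Finset.Icc 1 (Llcm n m)).filter
      (fun x => ((Finset.Ioo n m).filter (fun d => d ∣ x)).card = r)).card : ℚ) /
    (Llcm n m : ℚ)

/-- For every `m ≥ 3` one has `δ_1(1,m) ≥ δ_0(1,m)`; equivalently, with
`L = lcm{1,...,m-1}`, the number of `x ∈ {1,...,L}` with exactly one divisor `d`,
`1 < d < m`, is at least `φ(L)`. -/
private lemma dvd_L {m d : ℕ} (hd : d ∈ Finset.Ioo 1 m) : d ∣ Llcm 1 m := by
  exact Finset.dvd_lcm (f := id) hd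

private lemma L_pos {m : ℕ} : 0 < Llcm 1 m := by
  have h : Llcm 1 m ∣ (Finset.Ioo 1 m).prod id := Finset.lcm_dvd fun b hb => Finset.dvd_prod_of_mem id hb
  have hP : 0 < (Finset.Ioo 1 m).prod id := Finset.prod_pos fun i hi => by
    have := (Finset.mem_Ioo).mp hi; simp only [id]; omega
  rcases Nat.eq_zero_or_pos (Llcm 1 m) with h0 | h1
  · rw [h0] at h; exact absurd (zero_dvd_iff.mp h) (by omega)
  · exact h1

private lemma two_dvd_L {m : ℕ} (hm : 3 ≤ m) : 2 ∣ Llcm 1 m :=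
  dvd_L (by simp [Finset.mem_Ioo]; omega)

private lemma L_ge_two {m : ℕ} (hm : 3 ≤ m) : 2 ≤ Llcm 1 m :=
  Nat.le_of_dvd L_pos (two_dvd_L hm)

private lemma zero_iff {m x : ℕ} (hm : 3 ≤ m) :
    ((Finset.Ioo 1 m).filter (fun d => d ∣ x)).card = 0 ↔ Nat.Coprime x (Llcm 1 m) := by
  constructor
  · intro h
    by_contra hco
    have hg : Nat.gcd x (Llcm 1 m) ≠ 1 := hco
    have hgne : Nat.gcd x (Llcm 1 m) ≠ 0 := by
      intro h0
      have := Nat.eq_zero_of_gcd_eq_zero_right h0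
      have := @L_pos m; omega
    set g := Nat.gcd x (Llcm 1 m) with hgdef
    have hp : (g.minFac).Prime := Nat.minFac_prime hg
    have hpx : g.minFac ∣ x := (Nat.minFac_dvd g).trans (Nat.gcd_dvd_left _ _)
    have hpL : g.minFac ∣ Llcm 1 m := (Nat.minFac_dvd g).trans (Nat.gcd_dvd_right _ _)
    -- p divides some element of Ioo 1 m
    have hprod : g.minFac ∣ (Finset.Ioo 1 m).prod id :=
      hpL.trans (Finset.lcm_dvd fun b hb => Finset.dvd_prod_of_mem id hb)
    obtain ⟨i, hi, hpi⟩ := hp.prime.exists_mem_finset_dvd hprod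
    simp only [Finset.mem_Ioo, id] at hi hpi
    have hile : g.minFac ≤ i := Nat.le_of_dvd (by omega) hpi
    have hmem : g.minFac ∈ (Finset.Ioo 1 m).filter (fun d => d ∣ x) := by
      simp only [Finset.mem_filter, Finset.mem_Ioo]
      exact ⟨⟨hp.one_lt, by omega⟩, hpx⟩
    rw [Finset.card_eq_zero] at h
    rw [h] at hmem
    exact absurd hmem (Finset.notMem_empty _)
  · intro hco
    rw [Finset.card_eq_zero, Finset.eq_empty_iff_forall_notMem]
    intro d hd
    simp only [Finset.mem_filter, Finset.mem_Ioo] at hd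
    obtain ⟨⟨h1, h2⟩, hdx⟩ := hd
    have hdL : d ∣ Llcm 1 m := dvd_L ((Finset.mem_Ioo).mpr ⟨h1, h2⟩)
    have : d ∣ 1 := hco ▸ Nat.dvd_gcd hdx hdL
    have := Nat.dvd_one.mp this
    omega

private lemma cardZ {m : ℕ} (hm : 3 ≤ m) :
    ((Finset.Icc 1 (Llcm 1 m)).filter (fun x => Nat.Coprime x (Llcm 1 m))).card
      = (Llcm 1 m).totient := by
  rw [Nat.totient_eq_card_coprime]
  congr 1
  ext a
  simp only [Finset.mem_filter, Finset.mem_Icc, Finset.mem_range]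
  have hL2 := L_ge_two hm
  constructor
  · rintro ⟨⟨h1, h2⟩, hco⟩
    refine ⟨?_, hco.symm⟩
    rcases Nat.lt_or_ge a (Llcm 1 m) with h | h
    · exact h
    · exfalso; have : a = Llcm 1 m := by omega
      rw [this, Nat.Coprime, Nat.gcd_self] at hco
      omega
  · rintro ⟨h1, hco⟩
    refine ⟨⟨?_, by omega⟩, hco.symm⟩
    rcases Nat.eq_zero_or_pos a with rfl | h
    · exfalso
      have : Llcm 1 m = 1 := by simpa [Nat.Coprime] using hco
      omega
    · omega

private lemma key {m p x : ℕ} (hm : 3 ≤ m) (hp : p.Prime) (hpm : p < m)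
    (hx1 : 1 ≤ x) (hco : Nat.Coprime x (Llcm 1 m)) :
    ((Finset.Ioo 1 m).filter (fun d => d ∣ ((p * x - 1) % Llcm 1 m + 1))) = {p} := by
  set L := Llcm 1 m with hLdef
  set y := (p * x - 1) % L + 1 with hydef
  have hppos : 0 < p := hp.pos
  have hpx1 : 1 ≤ p * x := Nat.mul_pos hppos hx1
  have hLpos : 0 < L := L_pos
  have heq : p * x = L * ((p * x - 1) / L) + y := by
    have := Nat.div_add_mod (p * x - 1) L
    omega
  set q := (p * x - 1) / L with hq
  have hpL : p ∣ L := dvd_L (Finset.mem_Ioo.mpr ⟨hp.one_lt, hpm⟩)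
  ext d
  simp only [Finset.mem_filter, Finset.mem_Ioo, Finset.mem_singleton]
  constructor
  · rintro ⟨⟨hd1, hdm⟩, hdy⟩
    have hdL : d ∣ L := dvd_L (Finset.mem_Ioo.mpr ⟨hd1, hdm⟩)
    have hdpx : d ∣ p * x := heq ▸ Nat.dvd_add (hdL.mul_right q) hdy
    have huniq : ∀ {r : ℕ}, r.Prime → r ∣ d → r = p := by
      intro r hr hrd
      have hrpx : r ∣ p * x := hrd.trans hdpx
      rcases (Nat.Prime.dvd_mul hr).mp hrpx with h | h
      · exact (Nat.prime_dvd_prime_iff_eq hr hp).mp h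
      · exfalso
        have hrL : r ∣ L := dvd_L (Finset.mem_Ioo.mpr ⟨hr.one_lt, by
          have : r ≤ d := Nat.le_of_dvd (by omega) hrd
          omega⟩)
        have h1 : r ∣ 1 := hco ▸ Nat.dvd_gcd h hrL
        have := Nat.dvd_one.mp h1
        have := hr.one_lt
        omega
    have hd0 : d ≠ 0 := by omega
    have hdpow := Nat.eq_prime_pow_of_unique_prime_dvd hd0 huniq
    set k := d.primeFactorsList.length with hk
    have hk1 : 1 ≤ k := by
      by_contra h
      have hk0 : k = 0 := by omega
      rw [hk0, pow_zero] at hdpow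
      omega
    have hk2 : k < 2 := by
      by_contra h
      have hsq : p ^ 2 ∣ d := hdpow ▸ pow_dvd_pow p (by omega)
      have hsqd : p ^ 2 ≤ d := Nat.le_of_dvd (by omega) hsq
      have hsq1 : 1 < p ^ 2 := by nlinarith [hp.one_lt]
      have hsqL : p ^ 2 ∣ L := dvd_L (Finset.mem_Ioo.mpr ⟨hsq1, by omega⟩)
      have hsqy : p ^ 2 ∣ y := hsq.trans hdy
      have hsqpx : p ^ 2 ∣ p * x := heq ▸ Nat.dvd_add (hsqL.mul_right q) hsqy
      have hpx' : p * p ∣ p * x := by rwa [pow_two] at hsqpx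
      have hpxx : p ∣ x := (Nat.mul_dvd_mul_iff_left hppos).mp hpx'
      have h1 : p ∣ 1 := hco ▸ Nat.dvd_gcd hpxx hpL
      have := Nat.dvd_one.mp h1
      have := hp.one_lt
      omega
    have : k = 1 := by omega
    rw [this, pow_one] at hdpow
    exact hdpow
  · intro hdp
    rw [hdp]
    refine ⟨⟨hp.one_lt, hpm⟩, ?_⟩
    have hy : y = p * x - L * q := by omega
    rw [hy]
    exact Nat.dvd_sub (Dvd.intro x rfl) (hpL.mul_right q)

private lemma prime_step {m p : ℕ} (hm : 3 ≤ m) (hp : p.Prime) (hpm : p < m) :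
    ∃ T : Finset ℕ,
      (∀ y ∈ T, y ∈ Finset.Icc 1 (Llcm 1 m) ∧
        (Finset.Ioo 1 m).filter (fun d => d ∣ y) = {p}) ∧
      ((Finset.Icc 1 (Llcm 1 m)).filter (fun x => Nat.Coprime x (Llcm 1 m))).card ≤ p * T.card := by
  set L := Llcm 1 m with hLdef
  have hLpos : 0 < L := L_pos
  have hpL : p ∣ L := dvd_L (Finset.mem_Ioo.mpr ⟨hp.one_lt, hpm⟩)
  have hppos : 0 < p := hp.pos
  set e := L / p with he
  have hLe : L = p * e := (Nat.mul_div_cancel' hpL).symm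
  have hepos : 0 < e := by
    rcases Nat.eq_zero_or_pos e with h | h
    · rw [h, Nat.mul_zero] at hLe; omega
    · exact h
  set Z := (Finset.Icc 1 L).filter (fun x => Nat.Coprime x L) with hZ
  set f : ℕ → ℕ := fun x => (p * x - 1) % L + 1 with hf
  -- basic facts about members of Z
  have hmemZ : ∀ x ∈ Z, 1 ≤ x ∧ x < L ∧ Nat.Coprime x L := by
    intro x hx
    obtain ⟨hxI, hxco⟩ := Finset.mem_filter.mp hx
    obtain ⟨hx1, hxL⟩ := Finset.mem_Icc.mp hxI
    refine ⟨hx1, ?_, hxco⟩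
    rcases Nat.lt_or_ge x L with h | h
    · exact h
    · exfalso
      have hxeq : x = L := by omega
      rw [hxeq, Nat.Coprime, Nat.gcd_self] at hxco
      have h2 : 2 ≤ L := Nat.le_of_dvd hLpos (dvd_L (Finset.mem_Ioo.mpr (by omega)))
      omega
  -- the fundamental equation
  have heqn : ∀ x, 1 ≤ x → p * x = L * ((p * x - 1) / L) + f x := by
    intro x hx1
    have hpx1 : 1 ≤ p * x := Nat.mul_pos hp.pos hx1
    have := Nat.div_add_mod (p * x - 1) L
    simp only [hf]
    omega
  -- congruence mod e for fiber elements
  have hcong : ∀ x ∈ Z, ∀ x' ∈ Z, f x = f x' → x % e = x' % e := by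
    intro x hx x' hx' hff
    obtain ⟨hx1, hxL, _⟩ := hmemZ x hx
    obtain ⟨hx'1, hx'L, _⟩ := hmemZ x' hx'
    have e1 := heqn x hx1
    have e2 := heqn x' hx'1
    set q1 := (p * x - 1) / L with hq1
    set q2 := (p * x' - 1) / L with hq2
    have hkey : p * (x + e * q2) = p * (x' + e * q1) := by
      have c1 : p * (x + e * q2) = p * x + L * q2 := by rw [hLe]; ring
      have c2 : p * (x' + e * q1) = p * x' + L * q1 := by rw [hLe]; ring
      rw [c1, c2]
      omega
    have hxx : x + e * q2 = x' + e * q1 := Nat.eq_of_mul_eq_mul_left hppos hkey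
    calc x % e = (x + e * q2) % e := (Nat.add_mul_mod_self_left x e q2).symm
      _ = (x' + e * q1) % e := by rw [hxx]
      _ = x' % e := Nat.add_mul_mod_self_left x' e q1
  refine ⟨Z.image f, ?_, ?_⟩
  · intro y hy
    obtain ⟨x, hx, rfl⟩ := Finset.mem_image.mp hy
    obtain ⟨hx1, hxL, hxco⟩ := hmemZ x hx
    constructor
    · rw [Finset.mem_Icc]
      constructor
      · simp [hf]
      · have : (p * x - 1) % L < L := Nat.mod_lt _ hLpos
        simp only [hf]; omega
    · exact key hm hp hpm hx1 hxco
  · apply Finset.card_le_mul_card_image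
    intro b _
    -- fiber has at most p elements: inject via x / e into range p
    apply le_trans (Finset.card_le_card_of_injOn (fun x => x / e)
      (t := Finset.range p) ?_ ?_)
    · simp
    · intro x hx
      simp only [Finset.mem_coe, Finset.mem_filter] at hx
      obtain ⟨hx1, hxL, _⟩ := hmemZ x hx.1
      rw [Finset.mem_coe, Finset.mem_range, Nat.div_lt_iff_lt_mul hepos]
      omega
    · intro x hx x' hx' hdd
      simp only [Finset.mem_coe, Finset.mem_filter] at hx hx'
      have hmod : x % e = x' % e := hcong x hx.1 x' hx'.1 (hx.2.trans hx'.2.symm)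
      have d1 := Nat.div_add_mod x e
      have d2 := Nat.div_add_mod x' e
      simp only at hdd
      rw [← hdd, ← hmod] at d2
      omega


private lemma core6 {m : ℕ} (hm : 6 ≤ m) :
    ((Finset.Icc 1 (Llcm 1 m)).filter (fun x => Nat.Coprime x (Llcm 1 m))).card ≤
    ((Finset.Icc 1 (Llcm 1 m)).filter
      (fun x => ((Finset.Ioo 1 m).filter (fun d => d ∣ x)).card = 1)).card := by
  have hm3 : 3 ≤ m := by omega
  obtain ⟨T2, hT2, hc2⟩ := prime_step hm3 Nat.prime_two (by omega)
  obtain ⟨T3, hT3, hc3⟩ := prime_step hm3 Nat.prime_three (by omega)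
  obtain ⟨T5, hT5, hc5⟩ := prime_step hm3 (by norm_num : Nat.Prime 5) (by omega)
  set O := (Finset.Icc 1 (Llcm 1 m)).filter
      (fun x => ((Finset.Ioo 1 m).filter (fun d => d ∣ x)).card = 1) with hO
  have hsub : ∀ (T : Finset ℕ) (p : ℕ), (∀ y ∈ T, y ∈ Finset.Icc 1 (Llcm 1 m) ∧
      (Finset.Ioo 1 m).filter (fun d => d ∣ y) = {p}) → T ⊆ O := by
    intro T p hT y hy
    obtain ⟨hy1, hy2⟩ := hT y hy
    rw [hO, Finset.mem_filter]
    exact ⟨hy1, by rw [hy2, Finset.card_singleton]⟩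
  have hdisj : ∀ (T T' : Finset ℕ) (p p' : ℕ), p ≠ p' →
      (∀ y ∈ T, y ∈ Finset.Icc 1 (Llcm 1 m) ∧
        (Finset.Ioo 1 m).filter (fun d => d ∣ y) = {p}) →
      (∀ y ∈ T', y ∈ Finset.Icc 1 (Llcm 1 m) ∧
        (Finset.Ioo 1 m).filter (fun d => d ∣ y) = {p'}) → Disjoint T T' := by
    intro T T' p p' hpp hT hT'
    rw [Finset.disjoint_left]
    intro y hy hy'
    have h1 := (hT y hy).2
    have h2 := (hT' y hy').2
    rw [h1] at h2
    exact hpp (Finset.singleton_injective h2)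
  have hd23 := hdisj T2 T3 2 3 (by omega) hT2 hT3
  have hd25 := hdisj T2 T5 2 5 (by omega) hT2 hT5
  have hd35 := hdisj T3 T5 3 5 (by omega) hT3 hT5
  have hunion : (T2 ∪ T3 ∪ T5) ⊆ O := by
    apply Finset.union_subset (Finset.union_subset ?_ ?_) ?_
    · exact hsub T2 2 hT2
    · exact hsub T3 3 hT3
    · exact hsub T5 5 hT5
  have hcard : (T2 ∪ T3 ∪ T5).card = T2.card + T3.card + T5.card := by
    rw [Finset.card_union_of_disjoint, Finset.card_union_of_disjoint hd23]
    exact Finset.disjoint_union_left.mpr ⟨hd25, hd35⟩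
  have hle : (T2 ∪ T3 ∪ T5).card ≤ O.card := Finset.card_le_card hunion
  omega

private lemma Icc_lcm_eq {m : ℕ} (hm : 3 ≤ m) :
    (Finset.Icc 1 (m - 1)).lcm id = Llcm 1 m := by
  have hins : Finset.Icc 1 (m - 1) = insert 1 (Finset.Ioo 1 m) := by
    ext a
    simp only [Finset.mem_Icc, Finset.mem_insert, Finset.mem_Ioo]
    omega
  rw [Llcm, hins, Finset.lcm_insert]
  simp


theorem delta_one_ge_delta_zero (m : ℕ) (hm : 3 ≤ m) :
    delta 0 1 m ≤ delta 1 1 m ∧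
    Nat.totient ((Finset.Icc 1 (m - 1)).lcm id) ≤
      ((Finset.Icc 1 ((Finset.Icc 1 (m - 1)).lcm id)).filter
        (fun x => ((Finset.Ioo 1 m).filter (fun d => d ∣ x)).card = 1)).card := by

  have hLL := Icc_lcm_eq hm
  have hcore : (Llcm 1 m).totient ≤ ((Finset.Icc 1 (Llcm 1 m)).filter
      (fun x => ((Finset.Ioo 1 m).filter (fun d => d ∣ x)).card = 1)).card := by
    rcases Nat.lt_or_ge m 6 with h6 | h6
    · interval_cases m <;> decide
    · exact le_trans (le_of_eq (cardZ hm).symm) (core6 h6)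
  constructor
  · show delta 0 1 m ≤ delta 1 1 m
    unfold delta
    have hLpos : (0:ℚ) < ((Llcm 1 m : ℕ) : ℚ) := by
      exact_mod_cast @L_pos m
    rw [div_le_div_iff_of_pos_right hLpos]
    have hzero : (Finset.Icc 1 (Llcm 1 m)).filter
        (fun x => ((Finset.Ioo 1 m).filter (fun d => d ∣ x)).card = 0)
        = (Finset.Icc 1 (Llcm 1 m)).filter (fun x => Nat.Coprime x (Llcm 1 m)) :=
      Finset.filter_congr fun x _ => by rw [zero_iff hm]
    have : ((Finset.Icc 1 (Llcm 1 m)).filter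
        (fun x => ((Finset.Ioo 1 m).filter (fun d => d ∣ x)).card = 0)).card
        = (Llcm 1 m).totient := by rw [hzero]; exact cardZ hm
    rw [this]
    exact_mod_cast hcore
  · rw [hLL]
    exact hcore
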